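/- Let X and Y be disjoint sets, and let R₁ ⊆ F(X) and R₂ ⊆ F(Y) be symmetrized sets of relators each satisfying C''(4) and T(4). Then the union of the images of R₁ and R₂ in F(X ⊔ Y) under the canonical embeddings F(X) → F(X ⊔ Y) and F(Y) → F(X ⊔ Y) is a symmetrized set of relators satisfying C''(4) and T(4). (Hence the free product of two C''(4)–T(4) groups is again presented by a C''(4)–T(4) presentation.) -/

import Mathlib

set_option linter.unusedSectionVars false

/-- A *word* over `X` is a finite sequence of letters, where a letter is a generator
`x : X` together with a sign (`true` for `x`, `false` for `x⁻¹`). -/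
abbrev Word (X : Type*) := List (X × Bool)

/-- The formal inverse of a letter. -/
def letterInv {X : Type*} (l : X × Bool) : X × Bool := (l.1, !l.2)

/-- The element of the presented group `⟨X | R⟩` represented by a word. -/
def toG {X : Type*} (R : Set (FreeGroup X)) (w : Word X) : PresentedGroup R :=
  PresentedGroup.mk R (FreeGroup.mk w)

/-- A word is freely reduced if it has no two adjacent mutually inverse letters. -/
def FreelyReduced {X : Type*} (w : Word X) : Prop :=
  w.Chain' fun l₁ l₂ => l₂ ≠ letterInv l₁

/-- A nonempty word `p` is a piece w.r.t. `R` if two distinct relators of `R` both start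
with `p` (as reduced words, i.e. products without cancellation). -/
def IsPiece {X : Type*} [DecidableEq X] (R : Set (FreeGroup X)) (p : Word X) : Prop :=
  p ≠ [] ∧ ∃ r ∈ R, ∃ s ∈ R, r ≠ s ∧
    (∃ u, FreeGroup.toWord r = p ++ u) ∧ (∃ v, FreeGroup.toWord s = p ++ v)

/-- A (reduced) word is cyclically reduced if its last letter is not the inverse
of its first letter. -/
def CyclicallyReducedWord {X : Type*} (w : Word X) : Prop :=
  FreelyReduced w ∧ ¬ ∃ (a : X × Bool) (t : Word X), w = a :: (t ++ [letterInv a])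

/-- `R` is symmetrized: every relator is cyclically reduced and `R` is closed under
inversion and under cyclic permutation of reduced words. -/
def Symmetrized {X : Type*} [DecidableEq X] (R : Set (FreeGroup X)) : Prop :=
  (∀ r ∈ R, CyclicallyReducedWord (FreeGroup.toWord r)) ∧
  (∀ r ∈ R, r⁻¹ ∈ R) ∧
  (∀ r ∈ R, ∀ (a : X × Bool) (t : Word X),
      FreeGroup.toWord r = a :: t → FreeGroup.mk (t ++ [a]) ∈ R)

/-- The C''(4) condition: all relators have length four, and no relator is a product
(without cancellation) of fewer than four pieces. -/
def Cpp4 {X : Type*} [DecidableEq X] (R : Set (FreeGroup X)) : Prop :=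
  (∀ r ∈ R, (FreeGroup.toWord r).length = 4) ∧
  (∀ r ∈ R, ¬ ∃ ps : List (Word X), ps.length < 4 ∧ (∀ p ∈ ps, IsPiece R p) ∧
      FreeGroup.toWord r = ps.flatten)

/-- The product `r * s` is reduced without cancellation. -/
def NoCancel {X : Type*} [DecidableEq X] (r s : FreeGroup X) : Prop :=
  FreeGroup.toWord (r * s) = FreeGroup.toWord r ++ FreeGroup.toWord s

/-- The T(4) condition. -/
def T4 {X : Type*} [DecidableEq X] (R : Set (FreeGroup X)) : Prop :=
  ∀ r₁ ∈ R, ∀ r₂ ∈ R, ∀ r₃ ∈ R,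
    r₁ ≠ r₂⁻¹ → r₂ ≠ r₃⁻¹ → r₁ ≠ r₃⁻¹ →
    NoCancel r₁ r₂ ∨ NoCancel r₂ r₃ ∨ NoCancel r₃ r₁

/-- The word `a t₁⋯tₙ b` is a chain word with inner link path `s₁⋯sₙ` (n ≥ 1):
there are letters `u₀, …, uₙ` with `u₀ = a⁻¹`, `uₙ = b` and `tᵢ uᵢ sᵢ⁻¹ u_{i-1}⁻¹ ∈ R`
for all `i`. -/
def IsChainWord {X : Type*} (R : Set (FreeGroup X))
    (a : X × Bool) (t s : Word X) (b : X × Bool) : Prop :=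
  1 ≤ t.length ∧ ∃ hlen : t.length = s.length, ∃ u : ℕ → X × Bool,
    u 0 = letterInv a ∧ u t.length = b ∧
    ∀ i, ∀ hi : i < t.length,
      FreeGroup.mk [t[i], u (i + 1), letterInv (s[i]'(hlen ▸ hi)), letterInv (u i)] ∈ R

/-- A word is geodesic if no strictly shorter word represents the same element of the
presented group. -/
def Geodesic {X : Type*} (R : Set (FreeGroup X)) (w : Word X) : Prop :=
  ∀ v : Word X, toG R v = toG R w → w.length ≤ v.length

/-- A word is cyclically geodesic if all of its cyclic permutations are geodesic. -/
def CyclicallyGeodesic {X : Type*} (R : Set (FreeGroup X)) (w : Word X) : Prop :=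
  ∀ n : ℕ, Geodesic R (w.rotate n)

/-- A pair is a two-letter contiguous subword of (the reduced word of) a relator of `R`. -/
def IsPair {X : Type*} [DecidableEq X] (R : Set (FreeGroup X)) (l₁ l₂ : X × Bool) : Prop :=
  ∃ r ∈ R, [l₁, l₂] <:+: FreeGroup.toWord r

/-- `P` holds for all cyclically-consecutive entries of `w`. -/
def CyclicAdj {X : Type*} (P : (X × Bool) → (X × Bool) → Prop) (w : Word X) : Prop :=
  ∀ i, ∀ hi : i < w.length,
    P (w[i]) (w[(i + 1) % w.length]'(Nat.mod_lt _ (by omega)))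

/-- The presentation has parity with respect to `par : X → Bool` (`true` = white,
`false` = black) if in every relator, read cyclically, consecutive letters have
opposite parities. -/
def HasParity {X : Type*} [DecidableEq X] (R : Set (FreeGroup X)) (par : X → Bool) : Prop :=
  ∀ r ∈ R, CyclicAdj (fun l₁ l₂ => par l₁.1 ≠ par l₂.1) (FreeGroup.toWord r)

/-- The presentation is alternating: in every relator, read cyclically, letters of
exponent `+1` and exponent `-1` alternate. -/
def AlternatingPresentation {X : Type*} [DecidableEq X] (R : Set (FreeGroup X)) : Prop :=
  ∀ r ∈ R, CyclicAdj (fun l₁ l₂ => l₁.2 ≠ l₂.2) (FreeGroup.toWord r)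

/-- A word alternates in sign if adjacent letters have opposite exponents. -/
def AlternatesInSign {X : Type*} (w : Word X) : Prop :=
  w.Chain' fun l₁ l₂ => l₁.2 ≠ l₂.2

/-- A pair exchange: if `x₁x₂x₃x₄ ∈ R`, replace an occurrence of the contiguous subword
`x₁x₂` by `x₄⁻¹x₃⁻¹`. -/
def PairExchange {X : Type*} (R : Set (FreeGroup X)) (v w : Word X) : Prop :=
  ∃ (p q : Word X) (x₁ x₂ x₃ x₄ : X × Bool),
    FreeGroup.mk [x₁, x₂, x₃, x₄] ∈ R ∧
    v = p ++ [x₁, x₂] ++ q ∧ w = p ++ [letterInv x₄, letterInv x₃] ++ q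

/-- A free reduction deletes an adjacent mutually inverse pair of letters. -/
def FreeReductionStep {X : Type*} (v w : Word X) : Prop :=
  ∃ (p q : Word X) (l : X × Bool), v = p ++ [l, letterInv l] ++ q ∧ w = p ++ q

/-- A chain collapse replaces a contiguous chain word subword by its inner link path. -/
def ChainCollapseStep {X : Type*} (R : Set (FreeGroup X)) (v w : Word X) : Prop :=
  ∃ (p q : Word X) (a b : X × Bool) (t s : Word X),
    IsChainWord R a t s b ∧ v = p ++ (a :: (t ++ [b])) ++ q ∧ w = p ++ s ++ q

/-- A chain flip replaces one side of a conjugacy chain by the other: it replaces the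
whole word `s₁⋯sₙ` by `t₁⋯tₙ` (or vice versa) where, for some letter `a`, the word
`a t₁⋯tₙ a⁻¹` is a chain word with inner link path `s₁⋯sₙ`. -/
def ChainFlip {X : Type*} (R : Set (FreeGroup X)) (v w : Word X) : Prop :=
  ∃ a : X × Bool, IsChainWord R a w v (letterInv a) ∨ IsChainWord R a v w (letterInv a)

section Aux
variable {X Z : Type*} [DecidableEq X] [DecidableEq Z]

theorem reduce_eq_self {w : Word X} (h : FreelyReduced w) : FreeGroup.reduce w = w := by
  induction w with
  | nil => rfl
  | cons a t ih =>
    have ih' := ih h.tail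
    rw [FreeGroup.reduce.cons, ih']
    cases t with
    | nil => rfl
    | cons b s =>
      have hb : b ≠ letterInv a := (List.isChain_cons_cons.mp h).1
      have hc : ¬(a.1 = b.1 ∧ a.2 = !b.2) := by
        rintro ⟨h1, h2⟩
        exact hb (Prod.ext h1.symm (by simp [letterInv, h2]))
      show (if a.1 = b.1 ∧ a.2 = !b.2 then s else a :: b :: s) = _
      rw [if_neg hc]

theorem freelyReduced_reduce (w : Word X) : FreelyReduced (FreeGroup.reduce w) := by
  induction w with
  | nil => simp [FreelyReduced, List.Chain', List.isChain_nil]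
  | cons a t ih =>
    rw [FreeGroup.reduce.cons]
    cases h : FreeGroup.reduce t with
    | nil => simp [FreelyReduced, List.Chain', List.isChain_singleton]
    | cons b s =>
      rw [h] at ih
      show FreelyReduced (if a.1 = b.1 ∧ a.2 = !b.2 then s else a :: b :: s)
      by_cases hc : a.1 = b.1 ∧ a.2 = !b.2
      · rw [if_pos hc]; exact ih.tail
      · rw [if_neg hc]
        refine List.isChain_cons_cons.mpr ⟨fun he => hc ?_, ih⟩
        refine ⟨(congrArg Prod.fst he).symm, ?_⟩
        have := congrArg Prod.snd he
        simp only [letterInv] at this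
        rw [this, Bool.not_not]

theorem toWord_mk_eq {w : Word X} (h : FreelyReduced w) : (FreeGroup.mk w).toWord = w := by
  rw [FreeGroup.toWord_mk, reduce_eq_self h]

theorem freelyReduced_toWord (r : FreeGroup X) : FreelyReduced r.toWord := by
  rw [← FreeGroup.reduce_toWord]; exact freelyReduced_reduce _

/-- Lift a letter map to a word map. -/
def wmap (f : X → Z) (w : Word X) : Word Z := w.map fun l => (f l.1, l.2)

theorem wmap_append (f : X → Z) (a b : Word X) :
    wmap f (a ++ b) = wmap f a ++ wmap f b := List.map_append

/-- Range condition: every letter of `w` comes from `f`. -/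
def InR (f : X → Z) (w : Word Z) : Prop := ∀ l ∈ w, ∃ x, l.1 = f x

theorem inR_wmap (f : X → Z) (w : Word X) : InR f (wmap f w) := by
  intro l hl
  simp only [wmap, List.mem_map] at hl
  obtain ⟨a, _, ha⟩ := hl
  exact ⟨a.1, by rw [← ha]⟩

variable {f : X → Z} (hf : Function.Injective f)

include hf in
theorem freelyReduced_wmap {w : Word X} (h : FreelyReduced w) :
    FreelyReduced (wmap f w) := by
  unfold FreelyReduced wmap at *
  simp only [List.Chain'] at *; rw [List.isChain_map]
  refine h.imp fun a b hab he => hab ?_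
  have h1 : f b.1 = f a.1 := congrArg Prod.fst he
  have h2 : b.2 = !a.2 := congrArg Prod.snd he
  exact Prod.ext (hf h1) h2

include hf in
theorem toWord_map (r : FreeGroup X) :
    (FreeGroup.map f r).toWord = wmap f r.toWord := by
  conv_lhs => rw [← FreeGroup.mk_toWord (x := r)]
  rw [FreeGroup.map.mk]
  exact toWord_mk_eq (freelyReduced_wmap hf (freelyReduced_toWord r))

variable (g : Z → Option X) (hg : ∀ x, g (f x) = some x)

/-- Partial inverse of `wmap`. -/
def down (w : Word Z) : Word X :=
  w.filterMap fun l => (g l.1).map fun x => (x, l.2)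

theorem down_append (a b : Word Z) : down g (a ++ b) = down g a ++ down g b :=
  List.filterMap_append

theorem down_flatten (ps : List (Word Z)) :
    down g ps.flatten = (ps.map (down g)).flatten := by
  induction ps with
  | nil => rfl
  | cons p t ih => simp only [List.flatten_cons, down_append, ih, List.map_cons]

include hg in
theorem down_cons {c : Z × Bool} {x : X} (hx : c.1 = f x) (w : Word Z) :
    down g (c :: w) = (x, c.2) :: down g w := by
  simp [down, List.filterMap_cons, hx, hg]

include hg in
theorem down_wmap (w : Word X) : down g (wmap f w) = w := by
  induction w with
  | nil => rfl
  | cons a t ih =>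
    show down g ((f a.1, a.2) :: wmap f t) = a :: t
    rw [down_cons g hg rfl, ih]

include hg in
theorem wmap_down {w : Word Z} (hw : InR f w) : wmap f (down g w) = w := by
  induction w with
  | nil => rfl
  | cons a t ih =>
    obtain ⟨x, hx⟩ := hw a (List.mem_cons_self)
    rw [down_cons g hg hx]
    show (f x, a.2) :: wmap f (down g t) = a :: t
    rw [ih fun l hl => hw l (List.mem_cons_of_mem _ hl)]
    congr 1
    exact Prod.ext hx.symm rfl

include hf hg in
theorem map_inj {a b : FreeGroup X} (h : FreeGroup.map f a = FreeGroup.map f b) :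
    a = b := by
  apply FreeGroup.toWord_injective
  have h2 := congrArg FreeGroup.toWord h
  rw [toWord_map hf, toWord_map hf] at h2
  have h3 := congrArg (down g) h2
  rwa [down_wmap g hg, down_wmap g hg] at h3

include hf in
theorem noCancel_map {r s : FreeGroup X} (h : NoCancel r s) :
    NoCancel (FreeGroup.map f r) (FreeGroup.map f s) := by
  unfold NoCancel at *
  rw [← map_mul, toWord_map hf, toWord_map hf, toWord_map hf, h]
  exact wmap_append f _ _

theorem noCancel_disjoint {r s : FreeGroup Z}
    (h : ∀ l ∈ r.toWord, ∀ m ∈ s.toWord, l.1 ≠ m.1) : NoCancel r s := by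
  have hred : FreelyReduced (r.toWord ++ s.toWord) := by
    refine (freelyReduced_toWord r).append (freelyReduced_toWord s) ?_
    intro x hx y hy he
    exact h x (List.mem_of_mem_getLast? hx) y (List.mem_of_mem_head? hy)
      (congrArg Prod.fst he).symm
  unfold NoCancel
  rw [show r * s = FreeGroup.mk (r.toWord ++ s.toWord) by
      rw [← FreeGroup.mul_mk, FreeGroup.mk_toWord, FreeGroup.mk_toWord]]
  exact toWord_mk_eq hred

include hf hg in
theorem piece_down {R : Set (FreeGroup X)} {S : Set (FreeGroup Z)}
    (hS : ∀ r ∈ S, (∃ a ∈ R, r = FreeGroup.map f a) ∨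
      ∀ l ∈ FreeGroup.toWord r, ∀ x : X, l.1 ≠ f x)
    {p : Word Z} (hp : IsPiece S p) (hpr : InR f p) : IsPiece R (down g p) := by
  obtain ⟨hne, r, hr, s, hs, hrs, ⟨u, hu⟩, ⟨v, hv⟩⟩ := hp
  have key : ∀ r ∈ S, ∀ u : Word Z, FreeGroup.toWord r = p ++ u →
      ∃ a ∈ R, FreeGroup.map f a = r ∧
        FreeGroup.toWord a = down g p ++ down g u := by
    intro r hr u hu
    rcases hS r hr with ⟨a, ha, rfl⟩ | hbad
    · refine ⟨a, ha, rfl, ?_⟩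
      have h2 : wmap f a.toWord = p ++ u := by rw [← toWord_map hf]; exact hu
      have h3 := congrArg (down g) h2
      rwa [down_wmap g hg, down_append] at h3
    · exfalso
      obtain ⟨c, p', rfl⟩ := List.exists_cons_of_ne_nil hne
      obtain ⟨x, hx⟩ := hpr c (List.mem_cons_self)
      exact hbad c (by rw [hu]; simp) x hx
  obtain ⟨a, ha, hae, haw⟩ := key r hr u hu
  obtain ⟨b, hb, hbe, hbw⟩ := key s hs v hv
  refine ⟨?_, a, ha, b, hb, ?_, ⟨_, haw⟩, ⟨_, hbw⟩⟩
  · intro hcon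
    apply hne
    have := wmap_down g hg hpr
    rw [hcon] at this
    exact this.symm
  · intro hab
    exact hrs (by rw [← hae, ← hbe, hab])

include hf hg in
theorem cyclicallyReduced_wmap {w : Word X} (h : CyclicallyReducedWord w) :
    CyclicallyReducedWord (wmap f w) := by
  refine ⟨freelyReduced_wmap hf h.1, ?_⟩
  rintro ⟨c, t, ht⟩
  apply h.2
  have hw := congrArg (down g) ht
  rw [down_wmap g hg] at hw
  have hcr : ∃ x, c.1 = f x :=
    inR_wmap f w c (ht ▸ List.mem_cons_self)
  obtain ⟨x, hx⟩ := hcr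
  refine ⟨(x, c.2), down g t, ?_⟩
  rw [hw, down_cons g hg hx, down_append]
  have : down g [letterInv c] = [letterInv (x, c.2)] := by
    rw [down_cons g hg (show (letterInv c).1 = f x from hx)]
    rfl
  rw [this]

end Aux

/-- The union of the images, in the free group on `X ⊕ Y`, of two symmetrized C''(4)–T(4)
sets of relators over disjoint alphabets `X` and `Y` is again a symmetrized C''(4)–T(4)
set of relators. -/
theorem freeProduct_Cpp4_T4
    {X Y : Type*} [DecidableEq X] [DecidableEq Y]
    (R₁ : Set (FreeGroup X)) (R₂ : Set (FreeGroup Y))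
    (h₁sym : Symmetrized R₁) (h₁C : Cpp4 R₁) (h₁T : T4 R₁)
    (h₂sym : Symmetrized R₂) (h₂C : Cpp4 R₂) (h₂T : T4 R₂) :
    Symmetrized ((FreeGroup.map Sum.inl '' R₁ ∪ FreeGroup.map Sum.inr '' R₂ :
        Set (FreeGroup (X ⊕ Y)))) ∧
    Cpp4 ((FreeGroup.map Sum.inl '' R₁ ∪ FreeGroup.map Sum.inr '' R₂ :
        Set (FreeGroup (X ⊕ Y)))) ∧
    T4 ((FreeGroup.map Sum.inl '' R₁ ∪ FreeGroup.map Sum.inr '' R₂ :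
        Set (FreeGroup (X ⊕ Y)))) := by
  classical
  set S : Set (FreeGroup (X ⊕ Y)) :=
    FreeGroup.map Sum.inl '' R₁ ∪ FreeGroup.map Sum.inr '' R₂ with hS
  have hfl : Function.Injective (Sum.inl : X → X ⊕ Y) := Sum.inl_injective
  have hfr : Function.Injective (Sum.inr : Y → X ⊕ Y) := Sum.inr_injective
  set g₁ : X ⊕ Y → Option X := Sum.elim some (fun _ => none) with hg₁def
  set g₂ : X ⊕ Y → Option Y := Sum.elim (fun _ => none) some with hg₂def
  have hg₁ : ∀ x : X, g₁ (Sum.inl x) = some x := fun _ => rfl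
  have hg₂ : ∀ y : Y, g₂ (Sum.inr y) = some y := fun _ => rfl
  -- relators from the left side have all letters `inl`, and symmetrically
  have hL : ∀ a : FreeGroup X,
      InR Sum.inl (FreeGroup.toWord (FreeGroup.map (Sum.inl : X → X ⊕ Y) a)) := by
    intro a; rw [toWord_map hfl]; exact inR_wmap _ _
  have hR : ∀ b : FreeGroup Y,
      InR Sum.inr (FreeGroup.toWord (FreeGroup.map (Sum.inr : Y → X ⊕ Y) b)) := by
    intro b; rw [toWord_map hfr]; exact inR_wmap _ _
  -- covering hypothesis for `piece_down` on each side
  have hS₁ : ∀ r ∈ S, (∃ a ∈ R₁, r = FreeGroup.map Sum.inl a) ∨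
      ∀ l ∈ FreeGroup.toWord r, ∀ x : X, l.1 ≠ Sum.inl x := by
    rintro r (⟨a, ha, rfl⟩ | ⟨b, hb, rfl⟩)
    · exact Or.inl ⟨a, ha, rfl⟩
    · refine Or.inr fun l hl x hx => ?_
      obtain ⟨y, hy⟩ := hR b l hl
      rw [hy] at hx; exact Sum.inr_ne_inl hx
  have hS₂ : ∀ r ∈ S, (∃ b ∈ R₂, r = FreeGroup.map Sum.inr b) ∨
      ∀ l ∈ FreeGroup.toWord r, ∀ y : Y, l.1 ≠ Sum.inr y := by
    rintro r (⟨a, ha, rfl⟩ | ⟨b, hb, rfl⟩)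
    · refine Or.inr fun l hl y hy => ?_
      obtain ⟨x, hx⟩ := hL a l hl
      rw [hx] at hy; exact Sum.inl_ne_inr hy
    · exact Or.inl ⟨b, hb, rfl⟩
  -- mixed products never cancel
  have hmixLR : ∀ (a : FreeGroup X) (b : FreeGroup Y),
      NoCancel (FreeGroup.map (Sum.inl : X → X ⊕ Y) a) (FreeGroup.map Sum.inr b) := by
    intro a b
    refine noCancel_disjoint fun l hl m hm he => ?_
    obtain ⟨x, hx⟩ := hL a l hl
    obtain ⟨y, hy⟩ := hR b m hm
    rw [hx, hy] at he; exact Sum.inl_ne_inr he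
  have hmixRL : ∀ (b : FreeGroup Y) (a : FreeGroup X),
      NoCancel (FreeGroup.map (Sum.inr : Y → X ⊕ Y) b) (FreeGroup.map Sum.inl a) := by
    intro b a
    refine noCancel_disjoint fun l hl m hm he => ?_
    obtain ⟨y, hy⟩ := hR b l hl
    obtain ⟨x, hx⟩ := hL a m hm
    rw [hx, hy] at he; exact Sum.inr_ne_inl he
  refine ⟨⟨?_, ?_, ?_⟩, ⟨?_, ?_⟩, ?_⟩
  -- Symmetrized: cyclically reduced
  · rintro r (⟨a, ha, rfl⟩ | ⟨b, hb, rfl⟩)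
    · rw [toWord_map hfl]
      exact cyclicallyReduced_wmap hfl g₁ hg₁ (h₁sym.1 a ha)
    · rw [toWord_map hfr]
      exact cyclicallyReduced_wmap hfr g₂ hg₂ (h₂sym.1 b hb)
  -- Symmetrized: inverse closed
  · rintro r (⟨a, ha, rfl⟩ | ⟨b, hb, rfl⟩)
    · exact Or.inl ⟨a⁻¹, h₁sym.2.1 a ha, map_inv _ _⟩
    · exact Or.inr ⟨b⁻¹, h₂sym.2.1 b hb, map_inv _ _⟩
  -- Symmetrized: cyclic permutation closed
  · rintro r (⟨a, ha, rfl⟩ | ⟨b, hb, rfl⟩) <;> intro c t hct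
    · obtain ⟨x, hx⟩ : ∃ x, c.1 = Sum.inl x :=
        hL a c (hct ▸ List.mem_cons_self)
      have hw : FreeGroup.toWord a = (x, c.2) :: down g₁ t := by
        have h2 : wmap Sum.inl a.toWord = c :: t := by
          rw [← toWord_map hfl]; exact hct
        have h3 := congrArg (down g₁) h2
        rwa [down_wmap g₁ hg₁, down_cons g₁ hg₁ hx] at h3
      have hmem := h₁sym.2.2 a ha (x, c.2) (down g₁ t) hw
      refine Or.inl ⟨_, hmem, ?_⟩
      rw [FreeGroup.map.mk]
      congr 1
      show wmap Sum.inl (down g₁ t ++ [(x, c.2)]) = t ++ [c]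
      rw [wmap_append, wmap_down g₁ hg₁ (fun l hl => hL a l
        (hct ▸ List.mem_cons_of_mem _ hl))]
      congr 1
      show [((Sum.inl x : X ⊕ Y), c.2)] = [c]
      rw [show ((Sum.inl x : X ⊕ Y), c.2) = c from Prod.ext hx.symm rfl]
    · obtain ⟨y, hy⟩ : ∃ y, c.1 = Sum.inr y :=
        hR b c (hct ▸ List.mem_cons_self)
      have hw : FreeGroup.toWord b = (y, c.2) :: down g₂ t := by
        have h2 : wmap Sum.inr b.toWord = c :: t := by
          rw [← toWord_map hfr]; exact hct
        have h3 := congrArg (down g₂) h2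
        rwa [down_wmap g₂ hg₂, down_cons g₂ hg₂ hy] at h3
      have hmem := h₂sym.2.2 b hb (y, c.2) (down g₂ t) hw
      refine Or.inr ⟨_, hmem, ?_⟩
      rw [FreeGroup.map.mk]
      congr 1
      show wmap Sum.inr (down g₂ t ++ [(y, c.2)]) = t ++ [c]
      rw [wmap_append, wmap_down g₂ hg₂ (fun l hl => hR b l
        (hct ▸ List.mem_cons_of_mem _ hl))]
      congr 1
      show [((Sum.inr y : X ⊕ Y), c.2)] = [c]
      rw [show ((Sum.inr y : X ⊕ Y), c.2) = c from Prod.ext hy.symm rfl]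
  -- Cpp4: lengths
  · rintro r (⟨a, ha, rfl⟩ | ⟨b, hb, rfl⟩)
    · rw [toWord_map hfl]
      simpa [wmap] using h₁C.1 a ha
    · rw [toWord_map hfr]
      simpa [wmap] using h₂C.1 b hb
  -- Cpp4: no few pieces
  · rintro r (⟨a, ha, rfl⟩ | ⟨b, hb, rfl⟩) <;> rintro ⟨ps, hlen, hps, hflat⟩
    · apply h₁C.2 a ha
      have hinr : ∀ p ∈ ps, InR (Sum.inl : X → X ⊕ Y) p := by
        intro p hp l hl
        exact hL a l (by rw [hflat]; exact List.mem_flatten.2 ⟨p, hp, hl⟩)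
      refine ⟨ps.map (down g₁), by simpa using hlen, ?_, ?_⟩
      · rintro p' hp'
        obtain ⟨p, hp, rfl⟩ := List.mem_map.1 hp'
        exact piece_down hfl g₁ hg₁ hS₁ (hps p hp) (hinr p hp)
      · have h2 : wmap Sum.inl a.toWord = ps.flatten := by
          rw [← toWord_map hfl]; exact hflat
        have h3 := congrArg (down g₁) h2
        rwa [down_wmap g₁ hg₁, down_flatten] at h3
    · apply h₂C.2 b hb
      have hinr : ∀ p ∈ ps, InR (Sum.inr : Y → X ⊕ Y) p := by
        intro p hp l hl
        exact hR b l (by rw [hflat]; exact List.mem_flatten.2 ⟨p, hp, hl⟩)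
      refine ⟨ps.map (down g₂), by simpa using hlen, ?_, ?_⟩
      · rintro p' hp'
        obtain ⟨p, hp, rfl⟩ := List.mem_map.1 hp'
        exact piece_down hfr g₂ hg₂ hS₂ (hps p hp) (hinr p hp)
      · have h2 : wmap Sum.inr b.toWord = ps.flatten := by
          rw [← toWord_map hfr]; exact hflat
        have h3 := congrArg (down g₂) h2
        rwa [down_wmap g₂ hg₂, down_flatten] at h3
  -- T4
  · rintro r₁ (⟨a₁, ha₁, rfl⟩ | ⟨b₁, hb₁, rfl⟩) r₂ (⟨a₂, ha₂, rfl⟩ | ⟨b₂, hb₂, rfl⟩)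
      r₃ (⟨a₃, ha₃, rfl⟩ | ⟨b₃, hb₃, rfl⟩) <;> intro h12 h23 h13
    · -- all left
      have k12 : a₁ ≠ a₂⁻¹ := fun h => h12 (by rw [h, map_inv])
      have k23 : a₂ ≠ a₃⁻¹ := fun h => h23 (by rw [h, map_inv])
      have k13 : a₁ ≠ a₃⁻¹ := fun h => h13 (by rw [h, map_inv])
      rcases h₁T a₁ ha₁ a₂ ha₂ a₃ ha₃ k12 k23 k13 with h | h | h
      · exact Or.inl (noCancel_map hfl h)
      · exact Or.inr (Or.inl (noCancel_map hfl h))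
      · exact Or.inr (Or.inr (noCancel_map hfl h))
    · exact Or.inr (Or.inl (hmixLR a₂ b₃))
    · exact Or.inl (hmixLR a₁ b₂)
    · exact Or.inl (hmixLR a₁ b₂)
    · exact Or.inl (hmixRL b₁ a₂)
    · exact Or.inl (hmixRL b₁ a₂)
    · exact Or.inr (Or.inl (hmixRL b₂ a₃))
    · -- all right
      have k12 : b₁ ≠ b₂⁻¹ := fun h => h12 (by rw [h, map_inv])
      have k23 : b₂ ≠ b₃⁻¹ := fun h => h23 (by rw [h, map_inv])
      have k13 : b₁ ≠ b₃⁻¹ := fun h => h13 (by rw [h, map_inv])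
      rcases h₂T b₁ hb₁ b₂ hb₂ b₃ hb₃ k12 k23 k13 with h | h | h
      · exact Or.inl (noCancel_map hfr h)
      · exact Or.inr (Or.inl (noCancel_map hfr h))
      · exact Or.inr (Or.inr (noCancel_map hfr h))
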